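/- Let Δ ⊂ V be a finite set of nonzero vectors with Δ = −Δ, let Δ₊ ⊂ Δ satisfy Δ = Δ₊ ⊔ (−Δ₊), let ρ = (1/2)·Σ_{α∈Δ₊} α, and suppose there is a real number h∨ such that Σ_{α∈Δ} ⟨α,x⟩⟨α,y⟩ = 2h∨·⟨x,y⟩ for all x, y ∈ V. Let M ⊂ V be a full-rank lattice such that ⟨α,β⟩ ∈ ℤ for all α ∈ Δ, β ∈ M and ⟨ρ,β⟩ ∈ ℤ for all β ∈ M. Fix τ in the upper half-plane, set q = exp(2πiτ), and define ℱ(h;τ) = exp(2πi⟨ρ,h⟩) · Π_{n≥1}(1 − qⁿ)^{dim V} · Π_{α∈Δ₊}(1 − exp(−2πi⟨α,h⟩)) · Π_{α∈Δ} Π_{n≥1}(1 − qⁿ·exp(−2πi⟨α,h⟩)). Then for all β, β' ∈ M and all h ∈ V_ℂ one has ℱ(h + β + τβ'; τ) = exp(−2πi·h∨·⟨β',h⟩ − πi·h∨·τ·⟨β',β'⟩) · ℱ(h;τ). -/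

import Mathlib

open scoped BigOperators InnerProductSpace
open Complex Filter

noncomputable section

abbrev Evec (l : ℕ) := EuclideanSpace ℝ (Fin l)
abbrev EvecC (l : ℕ) := EuclideanSpace ℂ (Fin l)

/-- Inclusion of the real Euclidean space into its complexification. -/
def toC {l : ℕ} (x : Evec l) : EvecC l := WithLp.toLp 2 (fun i => (x i : ℂ))

/-- The complex-bilinear extension of the standard real inner product. -/
def cbil {l : ℕ} (v w : EvecC l) : ℂ := ∑ i, v i * w i

/-- The full-rank lattice spanned over `ℤ` by the `ℝ`-basis `b`. -/
def latt {l : ℕ} (b : Module.Basis (Fin l) ℝ (Evec l)) : Set (Evec l) :=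
  {x | ∃ c : Fin l → ℤ, x = ∑ i, c i • b i}

/-- `q = exp(2πiτ)`. -/
def qOf (τ : ℂ) : ℂ := Complex.exp (2 * (Real.pi : ℂ) * Complex.I * τ)

/-- The half-sum `ρ = (1/2)·Σ_{α ∈ Δ₊} α`. -/
def rhoOf {l : ℕ} (Δp : Finset (Evec l)) : Evec l := (2 : ℝ)⁻¹ • ∑ α ∈ Δp, α

/-- The Kac–Weyl denominator `ℱ(h;τ)`. -/
def kwDenom {l : ℕ} (Δ Δp : Finset (Evec l)) (τ : ℂ) (h : EvecC l) : ℂ :=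
  Complex.exp (2 * (Real.pi : ℂ) * Complex.I * cbil (toC (rhoOf Δp)) h) *
    (∏' n : ℕ, (1 - qOf τ ^ (n + 1))) ^ l *
    (∏ α ∈ Δp, (1 - Complex.exp (-(2 * (Real.pi : ℂ) * Complex.I) * cbil (toC α) h))) *
    ∏' p : Δ × ℕ, (1 - qOf τ ^ (p.2 + 1) *
      Complex.exp (-(2 * (Real.pi : ℂ) * Complex.I) * cbil (toC (p.1 : Evec l)) h))

/-! ### Auxiliary infrastructure -/

lemma hasProd_zero_of_eq_zero {ι : Type*} {f : ι → ℂ} (i0 : ι) (h : f i0 = 0) :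
    HasProd f 0 := by
  have he : ∀ᶠ s : Finset ι in atTop, (0 : ℂ) = ∏ i ∈ s, f i := by
    filter_upwards [eventually_ge_atTop ({i0} : Finset ι)] with s hs
    exact (Finset.prod_eq_zero (hs (Finset.mem_singleton_self i0)) h).symm
  exact (tendsto_const_nhds : Tendsto (fun _ : Finset ι => (0:ℂ)) atTop (nhds 0)).congr' he

lemma summable_log_one_sub {ι : Type*} {a : ι → ℂ} (ha : Summable a) :
    Summable fun i => Complex.log (1 - a i) := by
  apply Summable.of_norm
  apply Summable.of_norm_bounded_eventually (g := fun i => (3/2) * ‖a i‖) (ha.norm.mul_left _)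
  have hsmall : ∀ᶠ i in cofinite, ‖a i‖ ≤ 1/2 :=
    ha.tendsto_cofinite_zero.norm.eventually_le_const (by norm_num)
  filter_upwards [hsmall] with i hi
  have : (1 : ℂ) - a i = 1 + (-a i) := by ring
  rw [norm_norm, this]
  simpa using Complex.norm_log_one_add_half_le_self (z := -a i) (by simpa using hi)

lemma multipliable_one_sub {ι : Type*} {a : ι → ℂ} (ha : Summable a) :
    Multipliable fun i => 1 - a i := by
  by_cases h0 : ∀ i, 1 - a i ≠ 0
  · simpa [sub_eq_add_neg] using multipliable_one_add_of_summable ha.neg.norm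
  · push_neg at h0
    obtain ⟨i0, hi0⟩ := h0
    exact ⟨0, hasProd_zero_of_eq_zero i0 hi0⟩

/-- `F(u,v) = (1-u)·∏(1-qⁿ⁺¹u)·∏(1-qⁿ⁺¹v)`. -/
def Ffun (q u v : ℂ) : ℂ :=
  (1 - u) * (∏' n : ℕ, (1 - q ^ (n + 1) * u)) * (∏' n : ℕ, (1 - q ^ (n + 1) * v))

section q
variable {q : ℂ} (hq1 : ‖q‖ < 1) (hq0 : q ≠ 0)

include hq1 in
lemma summable_geom_aux (x : ℂ) : Summable fun n : ℕ => q ^ (n + 1) * x := by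
  have := (summable_geometric_of_norm_lt_one hq1).mul_left (q * x)
  refine this.congr fun n => ?_
  ring

include hq1 in
lemma mult_aux (x : ℂ) : Multipliable fun n : ℕ => 1 - q ^ (n + 1) * x :=
  multipliable_one_sub (summable_geom_aux hq1 x)

include hq1 in
lemma mult_aux' (x : ℂ) : Multipliable fun n : ℕ => 1 - q ^ (n + 1 + 1) * x :=
  (mult_aux hq1 (q * x)).congr fun n => by ring_nf

include hq1 in
/-- Peel the first factor. -/
lemma peel_aux (x : ℂ) :
    (∏' n : ℕ, (1 - q ^ (n + 1) * x)) = (1 - q * x) * ∏' n : ℕ, (1 - q ^ (n + 2) * x) := by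
  rw [tprod_eq_zero_mul' (f := fun n : ℕ => 1 - q ^ (n + 1) * x) (mult_aux' hq1 x)]
  norm_num

include hq1 hq0 in
/-- single upward shift -/
lemma Ffun_step (u v : ℂ) (huv : u * v = 1) :
    Ffun q (q⁻¹ * u) (q * v) = -(q⁻¹ * u) * Ffun q u v := by
  unfold Ffun
  have h1 : (∏' n : ℕ, (1 - q ^ (n + 1) * (q⁻¹ * u)))
      = (1 - u) * ∏' n : ℕ, (1 - q ^ (n + 1) * u) := by
    have he : (fun n : ℕ => (1 - q ^ (n + 1) * (q⁻¹ * u))) = fun n : ℕ => 1 - q ^ n * u := by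
      funext n
      have : q ^ (n + 1) * (q⁻¹ * u) = q ^ n * u := by
        field_simp
        ring
      rw [this]
    rw [he]
    have hm' : Multipliable fun n : ℕ => (1 : ℂ) - q ^ (n + 1) * u := mult_aux hq1 u
    rw [tprod_eq_zero_mul' (f := fun n : ℕ => 1 - q ^ n * u) (by simpa using hm')]
    norm_num
  have h2 : (∏' n : ℕ, (1 - q ^ (n + 1) * (q * v)))
      = ∏' n : ℕ, (1 - q ^ (n + 2) * v) := by
    refine tprod_congr fun n => ?_
    ring_nf
  rw [h1, h2, peel_aux hq1 v]
  have hqi : q⁻¹ * q = 1 := inv_mul_cancel₀ hq0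
  have key : (1 - q⁻¹ * u) = -(q⁻¹ * u) * (1 - q * v) := by
    linear_combination (-(q⁻¹ * q)) * huv - hqi
  calc (1 - q⁻¹ * u) * ((1 - u) * ∏' n : ℕ, (1 - q ^ (n + 1) * u)) *
        ∏' n : ℕ, (1 - q ^ (n + 2) * v)
      = (1 - q⁻¹ * u) * ((1 - u) * (∏' n : ℕ, (1 - q ^ (n + 1) * u)) *
        ∏' n : ℕ, (1 - q ^ (n + 2) * v)) := by ring
    _ = -(q⁻¹ * u) * (1 - q * v) * ((1 - u) * (∏' n : ℕ, (1 - q ^ (n + 1) * u)) *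
        ∏' n : ℕ, (1 - q ^ (n + 2) * v)) := by rw [← key]
    _ = _ := by ring

include hq1 hq0 in
/-- single downward shift -/
lemma Ffun_step_down (u v : ℂ) (huv : u * v = 1) (hu : u ≠ 0) :
    Ffun q (q * u) (q⁻¹ * v) = -u⁻¹ * Ffun q u v := by
  have h := Ffun_step hq1 hq0 (q * u) (q⁻¹ * v)
    (by rw [show q * u * (q⁻¹ * v) = u * v * (q * q⁻¹) by ring, huv, mul_inv_cancel₀ hq0]; ring)
  rw [show q⁻¹ * (q * u) = u by field_simp, show q * (q⁻¹ * v) = v by field_simp] at h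
  rw [h, ← mul_assoc, neg_mul_neg, inv_mul_cancel₀ hu, one_mul]

include hq1 hq0 in
lemma Ffun_shift (u v : ℂ) (huv : u * v = 1) (m : ℤ) :
    ∀ c : ℤ, 2 * c = m * (m + 1) →
      Ffun q (q ^ (-m) * u) (q ^ m * v) * q ^ c = (-1) ^ m * u ^ m * Ffun q u v := by
  have hu : u ≠ 0 := fun h => by simp [h] at huv
  have hvu : v = u⁻¹ := eq_inv_of_mul_eq_one_right (by linear_combination huv)
  induction m using Int.induction_on with
  | zero =>
    intro c hc
    have : c = 0 := by omega
    subst this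
    simp
  | succ n ih =>
    intro c hc
    have hc' : 2 * (c - (n + 1)) = (n : ℤ) * ((n : ℤ) + 1) := by linarith
    have ihn := ih (c - (n + 1)) hc'
    have e1 : q ^ (-((n : ℤ) + 1)) * u = q⁻¹ * (q ^ (-(n : ℤ)) * u) := by
      rw [show -((n : ℤ) + 1) = (-(n : ℤ)) + (-1) by ring, zpow_add₀ hq0, zpow_neg_one]
      ring
    have e2 : q ^ ((n : ℤ) + 1) * v = q * (q ^ (n : ℤ) * v) := by
      rw [zpow_add₀ hq0, zpow_one]
      ring
    have huv' : (q ^ (-(n : ℤ)) * u) * (q ^ (n : ℤ) * v) = 1 := by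
      rw [show (q ^ (-(n : ℤ)) * u) * (q ^ (n : ℤ) * v) = (q ^ (-(n : ℤ)) * q ^ (n : ℤ)) * (u * v)
        by ring, ← zpow_add₀ hq0, huv]
      simp
    rw [e1, e2, Ffun_step hq1 hq0 _ _ huv',
      show c = (c - ((n : ℤ) + 1)) + ((n : ℤ) + 1) by ring, zpow_add₀ hq0]
    have hX : q⁻¹ * q ^ (-(n : ℤ)) * q ^ ((n : ℤ) + 1) = 1 := by
      rw [← zpow_neg_one, ← zpow_add₀ hq0, ← zpow_add₀ hq0,
        show (-1 + -(n : ℤ) + ((n : ℤ) + 1)) = 0 by ring, zpow_zero]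
    calc -(q⁻¹ * (q ^ (-(n : ℤ)) * u)) * Ffun q (q ^ (-(n : ℤ)) * u) (q ^ (n : ℤ) * v) *
          (q ^ (c - ((n : ℤ) + 1)) * q ^ ((n : ℤ) + 1))
        = -(q⁻¹ * q ^ (-(n : ℤ)) * q ^ ((n : ℤ) + 1) * u) *
          (Ffun q (q ^ (-(n : ℤ)) * u) (q ^ (n : ℤ) * v) * q ^ (c - ((n : ℤ) + 1))) := by ring
      _ = -(q⁻¹ * q ^ (-(n : ℤ)) * q ^ ((n : ℤ) + 1) * u) *
          ((-1) ^ (n : ℤ) * u ^ (n : ℤ) * Ffun q u v) := by rw [ihn]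
      _ = (-1) ^ ((n : ℤ) + 1) * u ^ ((n : ℤ) + 1) * Ffun q u v := by
          rw [zpow_add_one₀ (by norm_num : (-1 : ℂ) ≠ 0), zpow_add_one₀ hu]
          linear_combination (-(u * (-1) ^ (n : ℤ) * u ^ (n : ℤ) * Ffun q u v)) * hX
  | pred n ih =>
    intro c hc
    have hc' : 2 * (c - n) = (-(n : ℤ)) * ((-(n : ℤ)) + 1) := by linarith
    have ihn := ih (c - n) hc'
    have e1 : q ^ (-(-(n : ℤ) - 1)) * u = q * (q ^ (-(-(n : ℤ))) * u) := by
      rw [show -(-(n : ℤ) - 1) = (-(-(n : ℤ))) + 1 by ring, zpow_add₀ hq0, zpow_one]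
      ring
    have e2 : q ^ (-(n : ℤ) - 1) * v = q⁻¹ * (q ^ (-(n : ℤ)) * v) := by
      rw [show -(n : ℤ) - 1 = (-(n : ℤ)) + (-1) by ring, zpow_add₀ hq0, zpow_neg_one]
      ring
    have huv' : (q ^ (-(-(n : ℤ))) * u) * (q ^ (-(n : ℤ)) * v) = 1 := by
      rw [show (q ^ (-(-(n : ℤ))) * u) * (q ^ (-(n : ℤ)) * v)
          = (q ^ (-(-(n : ℤ))) * q ^ (-(n : ℤ))) * (u * v) by ring, ← zpow_add₀ hq0, huv]
      simp
    have hu0 : q ^ (-(-(n : ℤ))) * u ≠ 0 := mul_ne_zero (zpow_ne_zero _ hq0) hu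
    have hinv : (q ^ (-(-(n : ℤ))) * u)⁻¹ = q ^ (-(n : ℤ)) * v := by
      rw [mul_inv, ← zpow_neg, neg_neg, hvu]
    rw [e1, e2, Ffun_step_down hq1 hq0 _ _ huv' hu0, hinv,
      show c = (c - (n : ℤ)) + (n : ℤ) by ring, zpow_add₀ hq0]
    have hX : q ^ (-(n : ℤ)) * q ^ (n : ℤ) = 1 := by
      rw [← zpow_add₀ hq0, show (-(n : ℤ) + (n : ℤ)) = 0 by ring, zpow_zero]
    calc -(q ^ (-(n : ℤ)) * v) * Ffun q (q ^ (-(-(n : ℤ))) * u) (q ^ (-(n : ℤ)) * v) *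
          (q ^ (c - (n : ℤ)) * q ^ (n : ℤ))
        = -(q ^ (-(n : ℤ)) * q ^ (n : ℤ) * v) * (Ffun q (q ^ (-(-(n : ℤ))) * u)
            (q ^ (-(n : ℤ)) * v) * q ^ (c - (n : ℤ))) := by ring
      _ = -(q ^ (-(n : ℤ)) * q ^ (n : ℤ) * v) *
            ((-1) ^ (-(n : ℤ)) * u ^ (-(n : ℤ)) * Ffun q u v) := by rw [ihn]
      _ = (-1) ^ (-(n : ℤ) - 1) * u ^ (-(n : ℤ) - 1) * Ffun q u v := by
          rw [zpow_sub_one₀ (by norm_num : (-1 : ℂ) ≠ 0), zpow_sub_one₀ hu, ← hvu,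
            show ((-1 : ℂ))⁻¹ = -1 by norm_num]
          linear_combination (-(v * (-1) ^ (-(n : ℤ)) * u ^ (-(n : ℤ)) * Ffun q u v)) * hX

end q

/-! ### cbil / splitting lemmas -/

lemma cbil_toC {l : ℕ} (x y : Evec l) : cbil (toC x) (toC y) = ((⟪x, y⟫_ℝ : ℝ) : ℂ) := by
  simp [cbil, toC, PiLp.inner_apply, mul_comm]

lemma cbil_add {l : ℕ} (v w w' : EvecC l) : cbil v (w + w') = cbil v w + cbil v w' := by
  simp [cbil, mul_add, Finset.sum_add_distrib]

lemma cbil_smul {l : ℕ} (c : ℂ) (v w : EvecC l) : cbil v (c • w) = c * cbil v w := by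
  simp only [cbil, Finset.mul_sum, PiLp.smul_apply, smul_eq_mul]
  exact Finset.sum_congr rfl fun i _ => by ring

lemma cbil_neg_left {l : ℕ} (x : Evec l) (w : EvecC l) :
    cbil (toC (-x)) w = -cbil (toC x) w := by
  simp [cbil, toC, Finset.sum_neg_distrib]

lemma prod_split {l : ℕ} {Δ Δp : Finset (Evec l)}
    (hcover : ∀ α : Evec l, α ∈ Δ ↔ (α ∈ Δp ∨ -α ∈ Δp))
    (hdisj : ∀ α ∈ Δp, -α ∉ Δp)
    {M : Type*} [CommMonoid M] (G : Evec l → M) :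
    ∏ α ∈ Δ, G α = ∏ α ∈ Δp, (G α * G (-α)) := by
  classical
  have himg : ∀ α : Evec l, α ∈ Δp.image (fun a => -a) ↔ -α ∈ Δp := by
    intro α
    simp only [Finset.mem_image]
    constructor
    · rintro ⟨a, ha, rfl⟩; simpa using ha
    · intro hα; exact ⟨-α, hα, by simp⟩
  have hΔ : Δ = Δp ∪ Δp.image (fun a => -a) := by
    ext α
    simp [hcover α, himg α, Finset.mem_union]
  have hd : Disjoint Δp (Δp.image (fun a => -a)) := by
    rw [Finset.disjoint_left]
    intro α hα hα'
    exact hdisj α hα ((himg α).1 hα')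
  rw [hΔ, Finset.prod_union hd, Finset.prod_image (by intro x _ y _ h; simpa using h),
    ← Finset.prod_mul_distrib]

lemma sum_split {l : ℕ} {Δ Δp : Finset (Evec l)}
    (hcover : ∀ α : Evec l, α ∈ Δ ↔ (α ∈ Δp ∨ -α ∈ Δp))
    (hdisj : ∀ α ∈ Δp, -α ∉ Δp)
    {M : Type*} [AddCommMonoid M] (G : Evec l → M) :
    ∑ α ∈ Δ, G α = ∑ α ∈ Δp, (G α + G (-α)) :=
  prod_split (M := Multiplicative M) hcover hdisj G

lemma prod_zpow_eq {ι : Type*} (s : Finset ι) (a : ℂ) (ha : a ≠ 0) (f : ι → ℤ) :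
    ∏ i ∈ s, a ^ f i = a ^ (∑ i ∈ s, f i) := by
  classical
  induction s using Finset.cons_induction with
  | empty => simp
  | cons i s hi ih => rw [Finset.prod_cons, Finset.sum_cons, ih, ← zpow_add₀ ha]

lemma tprod_split {l : ℕ} {Δ Δp : Finset (Evec l)}
    (hcover : ∀ α : Evec l, α ∈ Δ ↔ (α ∈ Δp ∨ -α ∈ Δp))
    (hdisj : ∀ α ∈ Δp, -α ∉ Δp)
    {q : ℂ} (hq1 : ‖q‖ < 1) (w : Evec l → ℂ) :
    (∏' p : Δ × ℕ, (1 - q ^ (p.2 + 1) * w (p.1 : Evec l))) =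
      ∏ α ∈ Δp, ((∏' n : ℕ, (1 - q ^ (n + 1) * w α)) * ∏' n : ℕ, (1 - q ^ (n + 1) * w (-α))) := by
  classical
  have hsum : Summable (fun p : Δ × ℕ => q ^ (p.2 + 1) * w (p.1 : Evec l)) := by
    apply Summable.of_norm
    refine (summable_prod_of_nonneg (fun p => norm_nonneg _)).mpr ⟨fun a => ?_, ?_⟩
    · have : Summable fun n : ℕ => ‖q‖ ^ (n + 1) * ‖w (a : Evec l)‖ := by
        have := (summable_geometric_of_norm_lt_one (by simpa using hq1 : ‖(‖q‖)‖ < 1)).mul_left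
          (‖q‖ * ‖w (a : Evec l)‖)
        refine this.congr fun n => ?_
        ring
      refine this.congr fun n => ?_
      rw [norm_mul, norm_pow]
    · exact Summable.of_finite
  have hmult : Multipliable (fun p : Δ × ℕ => 1 - q ^ (p.2 + 1) * w (p.1 : Evec l)) :=
    multipliable_one_sub hsum
  rw [hmult.tprod_prod' (fun a => mult_aux hq1 (w (a : Evec l))), tprod_fintype]
  rw [Finset.prod_coe_sort Δ (fun α => ∏' n : ℕ, (1 - q ^ (n + 1) * w α))]
  exact prod_split hcover hdisj (fun α => ∏' n : ℕ, (1 - q ^ (n + 1) * w α))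

/-- Let `Δ = Δ₊ ⊔ (−Δ₊)` be a finite symmetric set of nonzero vectors,
`ρ = (1/2)Σ_{α∈Δ₊}α`, and suppose `Σ_{α∈Δ} ⟨α,x⟩⟨α,y⟩ = 2h∨⟨x,y⟩` for all `x, y ∈ V`.
If the full-rank lattice `M` satisfies `⟨α,β⟩ ∈ ℤ` and `⟨ρ,β⟩ ∈ ℤ` for all `α ∈ Δ`,
`β ∈ M`, then for `τ ∈ ℍ` the Kac–Weyl denominator satisfies the level-`h∨`
quasi-periodicity law
`ℱ(h + β + τβ'; τ) = exp(−2πi·h∨·⟨β',h⟩ − πi·h∨·τ·⟨β',β'⟩)·ℱ(h;τ)` for `β, β' ∈ M`. -/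
theorem stmt12 {l : ℕ} (Δ Δp : Finset (Evec l)) (hΔ0 : (0 : Evec l) ∉ Δ)
    (hsym : ∀ α : Evec l, α ∈ Δ ↔ -α ∈ Δ)
    (hcover : ∀ α : Evec l, α ∈ Δ ↔ (α ∈ Δp ∨ -α ∈ Δp))
    (hdisj : ∀ α ∈ Δp, -α ∉ Δp)
    (hv : ℝ) (hcox : ∀ x y : Evec l, ∑ α ∈ Δ, ⟪α, x⟫_ℝ * ⟪α, y⟫_ℝ = 2 * hv * ⟪x, y⟫_ℝ)
    (b : Module.Basis (Fin l) ℝ (Evec l))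
    (hαint : ∀ α ∈ Δ, ∀ β ∈ latt b, ∃ n : ℤ, ⟪α, β⟫_ℝ = (n : ℝ))
    (hρint : ∀ β ∈ latt b, ∃ n : ℤ, ⟪rhoOf Δp, β⟫_ℝ = (n : ℝ))
    (τ : ℂ) (hτ : 0 < τ.im) (β β' : Evec l) (hβ : β ∈ latt b) (hβ' : β' ∈ latt b)
    (h : EvecC l) :
    kwDenom Δ Δp τ (h + toC β + τ • toC β') =
      Complex.exp (-(2 * (Real.pi : ℂ) * Complex.I * (hv : ℂ)) * cbil (toC β') h
          - (Real.pi : ℂ) * Complex.I * (hv : ℂ) * τ * (⟪β', β'⟫_ℝ : ℂ)) *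
        kwDenom Δ Δp τ h := by
  classical
  have hq0 : qOf τ ≠ 0 := Complex.exp_ne_zero _
  have hq1 : ‖qOf τ‖ < 1 := by
    rw [qOf, Complex.norm_exp, Real.exp_lt_one_iff]
    have hre : (2 * (Real.pi : ℂ) * I * τ).re = -(2 * Real.pi * τ.im) := by
      simp [Complex.mul_re, Complex.mul_im]
    rw [hre]
    nlinarith [Real.pi_pos]
  have hΔpΔ : Δp ⊆ Δ := fun α hα => (hcover α).2 (Or.inl hα)
  have hmex : ∀ α, α ∈ Δ → ∃ n : ℤ, ⟪α, β'⟫_ℝ = (n : ℝ) := fun α hα => hαint α hα β' hβ'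
  have hkex : ∀ α, α ∈ Δ → ∃ n : ℤ, ⟪α, β⟫_ℝ = (n : ℝ) := fun α hα => hαint α hα β hβ
  set m : Evec l → ℤ := fun α => if hα : α ∈ Δ then (hmex α hα).choose else 0 with hmdef
  set k : Evec l → ℤ := fun α => if hα : α ∈ Δ then (hkex α hα).choose else 0 with hkdef
  have hm : ∀ α ∈ Δ, ⟪α, β'⟫_ℝ = (m α : ℝ) := by
    intro α hα
    rw [hmdef]
    simp only [dif_pos hα]
    exact (hmex α hα).choose_spec
  have hk : ∀ α ∈ Δ, ⟪α, β⟫_ℝ = (k α : ℝ) := by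
    intro α hα
    rw [hkdef]
    simp only [dif_pos hα]
    exact (hkex α hα).choose_spec
  obtain ⟨rρ, hrρ⟩ := hρint β' hβ'
  obtain ⟨kρ, hkρ⟩ := hρint β hβ
  set h' : EvecC l := h + toC β + τ • toC β' with h'def
  -- shift of the bilinear pairing
  have hcb : ∀ x : Evec l, ∀ a mm : ℤ, ⟪x, β⟫_ℝ = (a : ℝ) → ⟪x, β'⟫_ℝ = (mm : ℝ) →
      cbil (toC x) h' = cbil (toC x) h + (a : ℂ) + τ * (mm : ℂ) := by
    intro x a mm ha hmm
    rw [h'def, cbil_add, cbil_add, cbil_smul, cbil_toC, cbil_toC, ha, hmm]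
    push_cast
    ring
  have expshift : ∀ (z : ℂ) (a mm : ℤ),
      Complex.exp (-(2 * (Real.pi : ℂ) * I) * (z + (a : ℂ) + τ * (mm : ℂ)))
        = qOf τ ^ (-mm) * Complex.exp (-(2 * (Real.pi : ℂ) * I) * z) := by
    intro z a mm
    rw [show -(2 * (Real.pi : ℂ) * I) * (z + (a : ℂ) + τ * (mm : ℂ))
        = (-(2 * (Real.pi : ℂ) * I) * z) + (((-a : ℤ) : ℂ) * (2 * (Real.pi : ℂ) * I))
          + (((-mm : ℤ) : ℂ) * (2 * (Real.pi : ℂ) * I * τ)) by push_cast; ring]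
    rw [Complex.exp_add, Complex.exp_add, Complex.exp_int_mul_two_pi_mul_I, mul_one,
      Complex.exp_int_mul]
    unfold qOf
    exact mul_comm _ _
  have expshift' : ∀ (z : ℂ) (a mm : ℤ),
      Complex.exp (2 * (Real.pi : ℂ) * I * (z + (a : ℂ) + τ * (mm : ℂ)))
        = qOf τ ^ (mm) * Complex.exp (2 * (Real.pi : ℂ) * I * z) := by
    intro z a mm
    rw [show 2 * (Real.pi : ℂ) * I * (z + (a : ℂ) + τ * (mm : ℂ))
        = (2 * (Real.pi : ℂ) * I * z) + ((a : ℤ) : ℂ) * (2 * (Real.pi : ℂ) * I)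
          + ((mm : ℤ) : ℂ) * (2 * (Real.pi : ℂ) * I * τ) by push_cast; ring]
    rw [Complex.exp_add, Complex.exp_add, Complex.exp_int_mul_two_pi_mul_I, mul_one,
      Complex.exp_int_mul]
    unfold qOf
    exact mul_comm _ _
  -- shifted exponentials
  have hw1 : ∀ α ∈ Δ, Complex.exp (-(2 * (Real.pi : ℂ) * I) * cbil (toC α) h')
      = qOf τ ^ (-(m α)) * Complex.exp (-(2 * (Real.pi : ℂ) * I) * cbil (toC α) h) := by
    intro α hα
    rw [hcb α (k α) (m α) (hk α hα) (hm α hα), expshift]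
  have hw2 : ∀ α ∈ Δ, Complex.exp (-(2 * (Real.pi : ℂ) * I) * cbil (toC (-α)) h')
      = qOf τ ^ (m α) * Complex.exp (-(2 * (Real.pi : ℂ) * I) * cbil (toC (-α)) h) := by
    intro α hα
    rw [cbil_neg_left, cbil_neg_left, hcb α (k α) (m α) (hk α hα) (hm α hα)]
    rw [show -(2 * (Real.pi : ℂ) * I) * -(cbil (toC α) h + ((k α : ℤ) : ℂ) + τ * ((m α : ℤ) : ℂ))
      = 2 * (Real.pi : ℂ) * I * (cbil (toC α) h + ((k α : ℤ) : ℂ) + τ * ((m α : ℤ) : ℂ)) by ring,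
      show -(2 * (Real.pi : ℂ) * I) * -cbil (toC α) h
      = 2 * (Real.pi : ℂ) * I * cbil (toC α) h by ring]
    exact expshift' _ (k α) (m α)
  have huv : ∀ α : Evec l, Complex.exp (-(2 * (Real.pi : ℂ) * I) * cbil (toC α) h) *
      Complex.exp (-(2 * (Real.pi : ℂ) * I) * cbil (toC (-α)) h) = 1 := by
    intro α
    rw [cbil_neg_left, ← Complex.exp_add,
      show -(2 * (Real.pi : ℂ) * I) * cbil (toC α) h
        + -(2 * (Real.pi : ℂ) * I) * -cbil (toC α) h = 0 by ring]
    exact Complex.exp_zero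
  -- exponent bookkeeping
  have hceven : ∀ α : Evec l, 2 * ((m α * (m α + 1)) / 2) = m α * (m α + 1) := fun α =>
    Int.mul_ediv_cancel' (Int.even_mul_succ_self (m α)).two_dvd
  set c : Evec l → ℤ := fun α => (m α * (m α + 1)) / 2 with hcdef
  -- the sum identities
  have hMsum : ∑ α ∈ Δp, m α = 2 * rρ := by
    have hreal : (rρ : ℝ) = 2⁻¹ * ∑ α ∈ Δp, (m α : ℝ) := by
      rw [← hrρ, rhoOf, real_inner_smul_left, sum_inner]
      congr 1
      exact Finset.sum_congr rfl fun α hα => hm α (hΔpΔ hα)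
    have hcast : ((2 * rρ : ℤ) : ℝ) = ((∑ α ∈ Δp, m α : ℤ) : ℝ) := by
      push_cast
      push_cast at hreal
      linarith
    exact_mod_cast hcast.symm
  have hM2sum : ((∑ α ∈ Δp, (m α) ^ 2 : ℤ) : ℝ) = hv * ⟪β', β'⟫_ℝ := by
    have hc := hcox β' β'
    rw [sum_split hcover hdisj (G := fun α => ⟪α, β'⟫_ℝ * ⟪α, β'⟫_ℝ)] at hc
    have hG : ∀ α ∈ Δp, ⟪α, β'⟫_ℝ * ⟪α, β'⟫_ℝ + ⟪-α, β'⟫_ℝ * ⟪-α, β'⟫_ℝ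
        = 2 * ((m α : ℝ)) ^ 2 := by
      intro α hα
      rw [inner_neg_left, hm α (hΔpΔ hα)]
      ring
    rw [Finset.sum_congr rfl hG] at hc
    have hsum2 : ∑ α ∈ Δp, 2 * ((m α : ℝ)) ^ 2 = 2 * ∑ α ∈ Δp, ((m α : ℝ)) ^ 2 := by
      rw [Finset.mul_sum]
    push_cast
    linarith
  have h2dvd : (2 : ℤ) ∣ ∑ α ∈ Δp, (m α) ^ 2 := by
    have hd1 : (2 : ℤ) ∣ ∑ α ∈ Δp, ((m α) ^ 2 - m α) := by
      refine Finset.dvd_sum fun α _ => ?_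
      rw [show (m α) ^ 2 - m α = (m α - 1) * ((m α - 1) + 1) by ring]
      exact (Int.even_mul_succ_self (m α - 1)).two_dvd
    have hd2 : (2 : ℤ) ∣ ∑ α ∈ Δp, m α := by
      rw [hMsum]
      exact ⟨rρ, rfl⟩
    have h3 : ∑ α ∈ Δp, (m α) ^ 2
        = (∑ α ∈ Δp, ((m α) ^ 2 - m α)) + ∑ α ∈ Δp, m α := by
      rw [← Finset.sum_add_distrib]
      exact Finset.sum_congr rfl fun α _ => by ring
    rw [h3]
    exact dvd_add hd1 hd2
  obtain ⟨s, hs2⟩ : ∃ s : ℤ, 2 * s = ∑ α ∈ Δp, (m α) ^ 2 :=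
    ⟨(∑ α ∈ Δp, (m α) ^ 2) / 2, Int.mul_ediv_cancel' h2dvd⟩
  have hcS : ∑ α ∈ Δp, c α = s + rρ := by
    have h2 : 2 * (∑ α ∈ Δp, c α) = (∑ α ∈ Δp, (m α) ^ 2) + (∑ α ∈ Δp, m α) := by
      rw [Finset.mul_sum, ← Finset.sum_add_distrib]
      refine Finset.sum_congr rfl fun α _ => ?_
      simp only [hcdef]
      rw [hceven α]
      ring
    omega
  -- identity (i)
  have hvec : ∀ j : Fin l, ∑ α ∈ Δ, ⟪α, β'⟫_ℝ * α j = 2 * hv * β' j := by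
    intro j
    have hc := hcox β' (EuclideanSpace.single j (1 : ℝ))
    simpa [EuclideanSpace.inner_single_right] using hc
  have hIp : ∑ α ∈ Δp, ((m α : ℤ) : ℂ) * cbil (toC α) h = (hv : ℂ) * cbil (toC β') h := by
    have e1 : ∀ α : Evec l, ((⟪α, β'⟫_ℝ : ℝ) : ℂ) * cbil (toC α) h
        = ∑ j, ((⟪α, β'⟫_ℝ * α j : ℝ) : ℂ) * h j := by
      intro α
      simp only [cbil, toC, Finset.mul_sum]
      refine Finset.sum_congr rfl fun j _ => ?_
      push_cast
      ring
    have hD : ∑ α ∈ Δ, ((⟪α, β'⟫_ℝ : ℝ) : ℂ) * cbil (toC α) h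
        = 2 * (hv : ℂ) * cbil (toC β') h := by
      rw [Finset.sum_congr rfl fun α _ => e1 α, Finset.sum_comm]
      have e2 : ∀ j : Fin l, ∑ α ∈ Δ, ((⟪α, β'⟫_ℝ * α j : ℝ) : ℂ) * h j
          = ((2 * hv * β' j : ℝ) : ℂ) * h j := by
        intro j
        rw [← Finset.sum_mul]
        congr 1
        rw [← Complex.ofReal_sum]
        exact congrArg _ (hvec j)
      rw [Finset.sum_congr rfl fun j _ => e2 j]
      simp only [cbil, toC, Finset.mul_sum]
      refine Finset.sum_congr rfl fun j _ => ?_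
      push_cast
      ring
    rw [sum_split hcover hdisj
      (G := fun α => ((⟪α, β'⟫_ℝ : ℝ) : ℂ) * cbil (toC α) h)] at hD
    have e3 : ∀ α ∈ Δp, ((⟪α, β'⟫_ℝ : ℝ) : ℂ) * cbil (toC α) h
        + ((⟪-α, β'⟫_ℝ : ℝ) : ℂ) * cbil (toC (-α)) h
        = 2 * (((m α : ℤ) : ℂ) * cbil (toC α) h) := by
      intro α hα
      rw [inner_neg_left, cbil_neg_left, hm α (hΔpΔ hα)]
      push_cast
      ring
    rw [Finset.sum_congr rfl e3, ← Finset.mul_sum] at hD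
    exact mul_left_cancel₀ two_ne_zero (by linear_combination hD)
  -- scalar products
  have hsign : (∏ α ∈ Δp, (-1 : ℂ) ^ (m α)) = 1 := by
    rw [prod_zpow_eq Δp (-1 : ℂ) (by norm_num) m, hMsum, zpow_mul]
    norm_num
  have huprod : (∏ α ∈ Δp, Complex.exp (-(2 * (Real.pi : ℂ) * I) * cbil (toC α) h) ^ (m α))
      = Complex.exp (-(2 * (Real.pi : ℂ) * I) * ((hv : ℂ) * cbil (toC β') h)) := by
    have e1 : ∀ α ∈ Δp, Complex.exp (-(2 * (Real.pi : ℂ) * I) * cbil (toC α) h) ^ (m α)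
        = Complex.exp ((m α : ℂ) * (-(2 * (Real.pi : ℂ) * I) * cbil (toC α) h)) :=
      fun α _ => (Complex.exp_int_mul _ (m α)).symm
    rw [Finset.prod_congr rfl e1, ← Complex.exp_sum]
    congr 1
    calc ∑ α ∈ Δp, (m α : ℂ) * (-(2 * (Real.pi : ℂ) * I) * cbil (toC α) h)
        = -(2 * (Real.pi : ℂ) * I) * ∑ α ∈ Δp, ((m α : ℤ) : ℂ) * cbil (toC α) h := by
          rw [Finset.mul_sum]
          exact Finset.sum_congr rfl fun α _ => by push_cast; ring
      _ = -(2 * (Real.pi : ℂ) * I) * ((hv : ℂ) * cbil (toC β') h) := by rw [hIp]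
  -- the C·D combination
  have hCD : ∀ g : EvecC l,
      (∏ α ∈ Δp, (1 - Complex.exp (-(2 * (Real.pi : ℂ) * I) * cbil (toC α) g))) *
        (∏' p : Δ × ℕ, (1 - qOf τ ^ (p.2 + 1) *
          Complex.exp (-(2 * (Real.pi : ℂ) * I) * cbil (toC (p.1 : Evec l)) g)))
      = ∏ α ∈ Δp, Ffun (qOf τ) (Complex.exp (-(2 * (Real.pi : ℂ) * I) * cbil (toC α) g))
          (Complex.exp (-(2 * (Real.pi : ℂ) * I) * cbil (toC (-α)) g)) := by
    intro g
    rw [tprod_split hcover hdisj hq1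
      (fun α => Complex.exp (-(2 * (Real.pi : ℂ) * I) * cbil (toC α) g)),
      ← Finset.prod_mul_distrib]
    exact Finset.prod_congr rfl fun α _ => by rw [Ffun]; ring
  -- factor 1 shift
  have hA : Complex.exp (2 * (Real.pi : ℂ) * I * cbil (toC (rhoOf Δp)) h')
      = qOf τ ^ (rρ : ℤ) * Complex.exp (2 * (Real.pi : ℂ) * I * cbil (toC (rhoOf Δp)) h) := by
    rw [hcb (rhoOf Δp) kρ rρ hkρ hrρ]
    exact expshift' _ kρ rρ
  -- the scalar identity
  have hscalar : Complex.exp (-(2 * (Real.pi : ℂ) * I * (hv : ℂ)) * cbil (toC β') h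
        - (Real.pi : ℂ) * I * (hv : ℂ) * τ * (⟪β', β'⟫_ℝ : ℂ)) * qOf τ ^ (∑ α ∈ Δp, c α)
      = qOf τ ^ (rρ : ℤ) *
        Complex.exp (-(2 * (Real.pi : ℂ) * I) * ((hv : ℂ) * cbil (toC β') h)) := by
    have hq_s : qOf τ ^ (s : ℤ) = Complex.exp ((s : ℂ) * (2 * (Real.pi : ℂ) * I * τ)) := by
      unfold qOf
      exact (Complex.exp_int_mul _ s).symm
    have hcast : (hv : ℂ) * ((⟪β', β'⟫_ℝ : ℝ) : ℂ) = 2 * (s : ℂ) := by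
      have h1 : ((2 * s : ℤ) : ℝ) = hv * ⟪β', β'⟫_ℝ := by rw [hs2]; exact hM2sum
      have h2 := congrArg (fun r : ℝ => (r : ℂ)) h1
      push_cast at h2
      linear_combination -h2
    have hXY : Complex.exp (-(2 * (Real.pi : ℂ) * I * (hv : ℂ)) * cbil (toC β') h
          - (Real.pi : ℂ) * I * (hv : ℂ) * τ * (⟪β', β'⟫_ℝ : ℂ)) *
          Complex.exp ((s : ℂ) * (2 * (Real.pi : ℂ) * I * τ))
        = Complex.exp (-(2 * (Real.pi : ℂ) * I) * ((hv : ℂ) * cbil (toC β') h)) := by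
      rw [← Complex.exp_add]
      congr 1
      linear_combination (-((Real.pi : ℂ) * I * τ)) * hcast
    rw [hcS, zpow_add₀ hq0, hq_s, ← hXY]
    ring
  -- main assembly
  refine mul_right_cancel₀ (zpow_ne_zero (∑ α ∈ Δp, c α) hq0) ?_
  rw [show kwDenom Δ Δp τ h' =
      Complex.exp (2 * (Real.pi : ℂ) * I * cbil (toC (rhoOf Δp)) h') *
        (∏' n : ℕ, (1 - qOf τ ^ (n + 1))) ^ l *
        (∏ α ∈ Δp, (1 - Complex.exp (-(2 * (Real.pi : ℂ) * I) * cbil (toC α) h'))) *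
        ∏' p : Δ × ℕ, (1 - qOf τ ^ (p.2 + 1) *
          Complex.exp (-(2 * (Real.pi : ℂ) * I) * cbil (toC (p.1 : Evec l)) h')) from rfl,
    show kwDenom Δ Δp τ h =
      Complex.exp (2 * (Real.pi : ℂ) * I * cbil (toC (rhoOf Δp)) h) *
        (∏' n : ℕ, (1 - qOf τ ^ (n + 1))) ^ l *
        (∏ α ∈ Δp, (1 - Complex.exp (-(2 * (Real.pi : ℂ) * I) * cbil (toC α) h))) *
        ∏' p : Δ × ℕ, (1 - qOf τ ^ (p.2 + 1) *
          Complex.exp (-(2 * (Real.pi : ℂ) * I) * cbil (toC (p.1 : Evec l)) h)) from rfl]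
  have hCDshift :
      (∏ α ∈ Δp, (1 - Complex.exp (-(2 * (Real.pi : ℂ) * I) * cbil (toC α) h'))) *
        (∏' p : Δ × ℕ, (1 - qOf τ ^ (p.2 + 1) *
          Complex.exp (-(2 * (Real.pi : ℂ) * I) * cbil (toC (p.1 : Evec l)) h'))) *
        qOf τ ^ (∑ α ∈ Δp, c α)
      = Complex.exp (-(2 * (Real.pi : ℂ) * I) * ((hv : ℂ) * cbil (toC β') h)) *
        ((∏ α ∈ Δp, (1 - Complex.exp (-(2 * (Real.pi : ℂ) * I) * cbil (toC α) h))) *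
          (∏' p : Δ × ℕ, (1 - qOf τ ^ (p.2 + 1) *
            Complex.exp (-(2 * (Real.pi : ℂ) * I) * cbil (toC (p.1 : Evec l)) h)))) := by
    rw [hCD h', hCD h, ← prod_zpow_eq Δp (qOf τ) hq0 c, ← Finset.prod_mul_distrib]
    have hper : ∀ α ∈ Δp,
        Ffun (qOf τ) (Complex.exp (-(2 * (Real.pi : ℂ) * I) * cbil (toC α) h'))
            (Complex.exp (-(2 * (Real.pi : ℂ) * I) * cbil (toC (-α)) h')) * qOf τ ^ (c α)
          = (-1) ^ (m α) * Complex.exp (-(2 * (Real.pi : ℂ) * I) * cbil (toC α) h) ^ (m α) *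
            Ffun (qOf τ) (Complex.exp (-(2 * (Real.pi : ℂ) * I) * cbil (toC α) h))
              (Complex.exp (-(2 * (Real.pi : ℂ) * I) * cbil (toC (-α)) h)) := by
      intro α hα
      rw [hw1 α (hΔpΔ hα), hw2 α (hΔpΔ hα)]
      exact Ffun_shift hq1 hq0 _ _ (huv α) (m α) (c α) (hceven α)
    rw [Finset.prod_congr rfl hper, Finset.prod_mul_distrib, Finset.prod_mul_distrib,
      hsign, one_mul, huprod]
  calc Complex.exp (2 * (Real.pi : ℂ) * I * cbil (toC (rhoOf Δp)) h') *
        (∏' n : ℕ, (1 - qOf τ ^ (n + 1))) ^ l *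
        (∏ α ∈ Δp, (1 - Complex.exp (-(2 * (Real.pi : ℂ) * I) * cbil (toC α) h'))) *
        (∏' p : Δ × ℕ, (1 - qOf τ ^ (p.2 + 1) *
          Complex.exp (-(2 * (Real.pi : ℂ) * I) * cbil (toC (p.1 : Evec l)) h'))) *
        qOf τ ^ (∑ α ∈ Δp, c α)
      = (Complex.exp (2 * (Real.pi : ℂ) * I * cbil (toC (rhoOf Δp)) h') *
          (∏' n : ℕ, (1 - qOf τ ^ (n + 1))) ^ l) *
        ((∏ α ∈ Δp, (1 - Complex.exp (-(2 * (Real.pi : ℂ) * I) * cbil (toC α) h'))) *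
          (∏' p : Δ × ℕ, (1 - qOf τ ^ (p.2 + 1) *
            Complex.exp (-(2 * (Real.pi : ℂ) * I) * cbil (toC (p.1 : Evec l)) h'))) *
          qOf τ ^ (∑ α ∈ Δp, c α)) := by ring
    _ = (qOf τ ^ (rρ : ℤ) * Complex.exp (2 * (Real.pi : ℂ) * I * cbil (toC (rhoOf Δp)) h) *
          (∏' n : ℕ, (1 - qOf τ ^ (n + 1))) ^ l) *
        (Complex.exp (-(2 * (Real.pi : ℂ) * I) * ((hv : ℂ) * cbil (toC β') h)) *
          ((∏ α ∈ Δp, (1 - Complex.exp (-(2 * (Real.pi : ℂ) * I) * cbil (toC α) h))) *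
            (∏' p : Δ × ℕ, (1 - qOf τ ^ (p.2 + 1) *
              Complex.exp (-(2 * (Real.pi : ℂ) * I) * cbil (toC (p.1 : Evec l)) h))))) := by
        rw [hCDshift, hA]
    _ = (qOf τ ^ (rρ : ℤ) *
          Complex.exp (-(2 * (Real.pi : ℂ) * I) * ((hv : ℂ) * cbil (toC β') h))) *
        (Complex.exp (2 * (Real.pi : ℂ) * I * cbil (toC (rhoOf Δp)) h) *
          (∏' n : ℕ, (1 - qOf τ ^ (n + 1))) ^ l *
          (∏ α ∈ Δp, (1 - Complex.exp (-(2 * (Real.pi : ℂ) * I) * cbil (toC α) h))) *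
          (∏' p : Δ × ℕ, (1 - qOf τ ^ (p.2 + 1) *
            Complex.exp (-(2 * (Real.pi : ℂ) * I) * cbil (toC (p.1 : Evec l)) h)))) := by ring
    _ = _ := by rw [← hscalar]; ring
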